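/- arXiv:1108.2668 — 2 statements merged into one kernel-verified Lean document; each statement's English description precedes it below -/
import Mathlib

section
/- Let a ≥ 1 be real and let g ∈ G be the element with T_g = diag(√a, 1/√a) and θ_g(t) = (1/π) arctan(tan(πt)/a) (extended compatibly). Then inf_{λ ∈ ℂ} Δ(gλ) = (1/2) log a, where λ ∈ ℂ acts on G as the subgroup of lifts of conformal maps and Δ(g) = max{sup_t |θ_g(t) − t|, log‖T_g‖, log‖T_g^{−1}‖}. -/
open scoped Real

/-- The universal cover `G` of `GL₂⁺(ℝ)`, realized as pairs `g = (T_g, θ_g)` where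
`T_g ∈ GL₂⁺(ℝ)` and `θ_g : ℝ → ℝ` is increasing (and continuous) with
`θ_g(t+1) = θ_g(t) + 1`, inducing the same map as `T_g` on the circle
`ℝ/2ℤ ≅ (ℝ² ∖ {0})/ℝ_{>0}`. -/
structure GT where
  T : Matrix (Fin 2) (Fin 2) ℝ
  θ : ℝ → ℝ
  det_pos : 0 < T.det
  mono : StrictMono θ
  cont : Continuous θ
  per : ∀ t, θ (t + 1) = θ t + 1
  compat : ∀ t : ℝ, ∃ r : ℝ, 0 < r ∧
    T.mulVec ![Real.cos (π * t), Real.sin (π * t)] =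
      r • ![Real.cos (π * θ t), Real.sin (π * θ t)]

/-- The operator (euclidean) norm of a `2 × 2` real matrix. -/
noncomputable def opNorm (T : Matrix (Fin 2) (Fin 2) ℝ) : ℝ :=
  ‖LinearMap.toContinuousLinearMap (Matrix.toEuclideanLin T)‖

/-- `Δ(g) = max { sup_t |θ_g(t) − t|, log ‖T_g‖, log ‖T_g⁻¹‖ }`. -/
noncomputable def GT.Δ (g : GT) : ℝ :=
  max (⨆ t : ℝ, |g.θ t - t|) (max (Real.log (opNorm g.T)) (Real.log (opNorm g.T⁻¹)))

/-- The identity element of `G`. -/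
def GT.one : GT where
  T := 1
  θ := id
  det_pos := by simp
  mono := strictMono_id
  cont := continuous_id
  per := fun t => rfl
  compat := fun t => ⟨1, one_pos, by simp [Matrix.one_mulVec]⟩

/-- Multiplication in `G`: `(T_g, θ_g) · (T_h, θ_h) = (T_g T_h, θ_g ∘ θ_h)`. -/
noncomputable def GT.mul (g h : GT) : GT where
  T := g.T * h.T
  θ := g.θ ∘ h.θ
  det_pos := by rw [Matrix.det_mul]; exact mul_pos g.det_pos h.det_pos
  mono := g.mono.comp h.mono
  cont := g.cont.comp h.cont
  per := fun t => by simp [h.per t, g.per (h.θ t)]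
  compat := by
    intro t
    obtain ⟨r, hr, hv⟩ := h.compat t
    obtain ⟨s, hs, hw⟩ := g.compat (h.θ t)
    refine ⟨r * s, mul_pos hr hs, ?_⟩
    rw [← Matrix.mulVec_mulVec, hv, Matrix.mulVec_smul, hw, smul_smul]; rfl

lemma GT.theta_add_nat (g : GT) (t : ℝ) (n : ℕ) : g.θ (t + n) = g.θ t + n := by
  induction n with
  | zero => simp
  | succ k ih =>
      push_cast
      rw [← add_assoc, g.per, ih]
      ring

lemma GT.surj (g : GT) : Function.Surjective g.θ := by
  apply Continuous.surjective g.cont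
  · apply Filter.tendsto_atTop_atTop.2
    intro b
    obtain ⟨n, hn⟩ := exists_nat_ge (b - g.θ 0)
    refine ⟨(n : ℝ), fun a ha => ?_⟩
    have := g.theta_add_nat 0 n
    have h2 : g.θ (0 + (n : ℝ)) ≤ g.θ a := g.mono.monotone (by simpa using ha)
    rw [this] at h2
    linarith
  · apply Filter.tendsto_atBot_atBot.2
    intro b
    obtain ⟨n, hn⟩ := exists_nat_ge (g.θ 0 - b)
    refine ⟨-(n : ℝ), fun a ha => ?_⟩
    have := g.theta_add_nat (-(n : ℝ)) n
    have h2 : g.θ a ≤ g.θ (-(n : ℝ)) := g.mono.monotone ha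
    simp only [neg_add_cancel] at this
    linarith

/-- `θ_g` as an order isomorphism of `ℝ`. -/
noncomputable def GT.orderIso (g : GT) : ℝ ≃o ℝ :=
  StrictMono.orderIsoOfSurjective g.θ g.mono g.surj

lemma GT.orderIso_apply (g : GT) (t : ℝ) : g.orderIso t = g.θ t := rfl

/-- Inversion in `G`: `(T_g, θ_g)⁻¹ = (T_g⁻¹, θ_g⁻¹)`. -/
noncomputable def GT.inv (g : GT) : GT where
  T := g.T⁻¹
  θ := g.orderIso.symm
  det_pos := by
    rw [Matrix.det_nonsing_inv, Ring.inverse_eq_inv']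
    exact inv_pos.2 g.det_pos
  mono := g.orderIso.symm.strictMono
  cont := OrderIso.continuous _
  per := by
    intro t
    apply g.orderIso.injective
    have h1 : g.orderIso (g.orderIso.symm (t + 1)) = t + 1 := g.orderIso.apply_symm_apply _
    have h2 : g.orderIso (g.orderIso.symm t + 1) = t + 1 := by
      rw [g.orderIso_apply, g.per, ← g.orderIso_apply, g.orderIso.apply_symm_apply]
    rw [h1, h2]
  compat := by
    intro t
    obtain ⟨r, hr, hv⟩ := g.compat (g.orderIso.symm t)
    rw [show g.θ (g.orderIso.symm t) = t from g.orderIso.apply_symm_apply t] at hv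
    refine ⟨r⁻¹, inv_pos.2 hr, ?_⟩
    have hdet : g.T.det ≠ 0 := ne_of_gt g.det_pos
    have := congrArg (fun v => g.T⁻¹.mulVec v) hv
    simp only [Matrix.mulVec_mulVec, Matrix.mulVec_smul] at this
    rw [Matrix.nonsing_inv_mul g.T (isUnit_iff_ne_zero.2 hdet), Matrix.one_mulVec] at this
    rw [this, smul_smul, inv_mul_cancel₀ (ne_of_gt hr), one_smul]

/-- The left-invariant metric `d_G(g, h) = Δ(h⁻¹ g)` on `G`. -/
noncomputable def dG (g h : GT) : ℝ := GT.Δ (GT.mul (GT.inv h) g)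


section AuxHelpers
open Real

lemma norm_euclid (w : Fin 2 → ℝ) :
    ‖(WithLp.equiv 2 (Fin 2 → ℝ)).symm w‖ = Real.sqrt (w 0 ^ 2 + w 1 ^ 2) := by
  simp [EuclideanSpace.norm_eq, Fin.sum_univ_two, sq_abs]

lemma opNorm_le_of (M : Matrix (Fin 2) (Fin 2) ℝ) (C : ℝ) (hC : 0 ≤ C)
    (h : ∀ v : Fin 2 → ℝ, (M.mulVec v 0)^2 + (M.mulVec v 1)^2 ≤ C^2 * ((v 0)^2 + (v 1)^2)) :
    opNorm M ≤ C := by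
  apply ContinuousLinearMap.opNorm_le_bound _ hC
  intro v
  obtain ⟨w, rfl⟩ := (WithLp.equiv 2 (Fin 2 → ℝ)).symm.surjective v
  have e : Matrix.toEuclideanLin M ((WithLp.equiv 2 (Fin 2 → ℝ)).symm w) =
      (WithLp.equiv 2 (Fin 2 → ℝ)).symm (M.mulVec w) := rfl
  rw [LinearMap.coe_toContinuousLinearMap', e,
    norm_euclid, norm_euclid]
  rw [← Real.sqrt_sq hC, ← Real.sqrt_mul (sq_nonneg C)]
  exact Real.sqrt_le_sqrt (h w)

lemma le_opNorm_of (M : Matrix (Fin 2) (Fin 2) ℝ) (v : Fin 2 → ℝ) (c : ℝ) (hc : 0 ≤ c)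
    (hv : (v 0)^2 + (v 1)^2 = 1)
    (h : c^2 ≤ (M.mulVec v 0)^2 + (M.mulVec v 1)^2) : c ≤ opNorm M := by
  have := (LinearMap.toContinuousLinearMap (Matrix.toEuclideanLin M)).le_opNorm
    ((WithLp.equiv 2 (Fin 2 → ℝ)).symm v)
  have e : Matrix.toEuclideanLin M ((WithLp.equiv 2 (Fin 2 → ℝ)).symm v) =
      (WithLp.equiv 2 (Fin 2 → ℝ)).symm (M.mulVec v) := rfl
  rw [LinearMap.coe_toContinuousLinearMap', e,
    norm_euclid, norm_euclid, hv, Real.sqrt_one, mul_one] at this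
  calc c = Real.sqrt (c^2) := (Real.sqrt_sq hc).symm
    _ ≤ Real.sqrt ((M.mulVec v 0)^2 + (M.mulVec v 1)^2) := Real.sqrt_le_sqrt h
    _ ≤ opNorm M := this

lemma mulVec0 (p q r t : ℝ) (v : Fin 2 → ℝ) :
    (!![p,q;r,t]).mulVec v 0 = p * v 0 + q * v 1 := by
  simp [Matrix.mulVec, dotProduct, Fin.sum_univ_two]
lemma mulVec1 (p q r t : ℝ) (v : Fin 2 → ℝ) :
    (!![p,q;r,t]).mulVec v 1 = r * v 0 + t * v 1 := by
  simp [Matrix.mulVec, dotProduct, Fin.sum_univ_two]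

lemma opNorm_M (s u c C S : ℝ) (hs : 1 ≤ s) (hu : u * s = 1) (hc : 0 < c)
    (hCS : C^2 + S^2 = 1) :
    opNorm (c • !![s*C, -(s*S); u*S, u*C]) = c * s := by
  have hs0 : (0:ℝ) < s := lt_of_lt_of_le one_pos hs
  have hu0 : 0 < u := by nlinarith
  have hus : u ≤ s := by nlinarith
  apply le_antisymm
  · apply opNorm_le_of _ _ (by positivity)
    intro v
    simp only [Matrix.smul_mulVec, Pi.smul_apply, smul_eq_mul, mulVec0, mulVec1]
    have e : (c*(s*C*v 0 + -(s*S)*v 1))^2 + (c*(u*S*v 0 + u*C*v 1))^2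
        = c^2*s^2*((v 0)^2+(v 1)^2) - c^2*(s^2-u^2)*(S*v 0+C*v 1)^2 := by
      linear_combination (c^2*s^2*((v 0)^2 + (v 1)^2)) * hCS
    rw [e]
    have h1 : 0 ≤ c^2*(s^2-u^2)*(S*v 0+C*v 1)^2 := by
      apply mul_nonneg (mul_nonneg (sq_nonneg c) _) (sq_nonneg _)
      nlinarith
    nlinarith [sq_nonneg c]
  · apply le_opNorm_of _ ![C, -S] _ (by positivity) (by simpa using hCS)
    simp only [Matrix.smul_mulVec, Pi.smul_apply, smul_eq_mul, mulVec0, mulVec1]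
    have h0 : ![C, -S] 0 = C := rfl
    have h1 : ![C, -S] 1 = -S := rfl
    rw [h0, h1]
    have e1 : c * (s*C*C + -(s*S)*(-S)) = c*s := by linear_combination c*s*hCS
    have e2 : c * (u*S*C + u*C*(-S)) = 0 := by ring
    rw [e1, e2]
    nlinarith
lemma opNorm_N (s u c d C S : ℝ) (hs : 1 ≤ s) (hu : u * s = 1) (hc : 0 < c) (hd : d * c = 1)
    (hCS : C^2 + S^2 = 1) :
    opNorm (d • !![u*C, s*S; -(u*S), s*C]) = d * s := by
  have hs0 : (0:ℝ) < s := lt_of_lt_of_le one_pos hs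
  have hu0 : 0 < u := by nlinarith
  have hus : u ≤ s := by nlinarith
  have hd0 : 0 < d := by nlinarith
  apply le_antisymm
  · apply opNorm_le_of _ _ (by positivity)
    intro v
    simp only [Matrix.smul_mulVec, Pi.smul_apply, smul_eq_mul, mulVec0, mulVec1]
    have e : (d*(u*C*v 0 + s*S*v 1))^2 + (d*(-(u*S)*v 0 + s*C*v 1))^2
        = d^2*(u^2*(v 0)^2 + s^2*(v 1)^2) := by
      linear_combination (d^2*u^2*(v 0)^2 + d^2*s^2*(v 1)^2) * hCS
    rw [e]
    have h2 : 0 ≤ d^2*(s^2-u^2)*(v 0)^2 := by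
      apply mul_nonneg (mul_nonneg (sq_nonneg d) _) (sq_nonneg _)
      nlinarith
    nlinarith [h2]
  · apply le_opNorm_of _ ![0, 1] _ (by positivity) (by norm_num)
    simp only [Matrix.smul_mulVec, Pi.smul_apply, smul_eq_mul, mulVec0, mulVec1]
    have h0 : ![(0:ℝ), 1] 0 = 0 := rfl
    have h1 : ![(0:ℝ), 1] 1 = 1 := rfl
    rw [h0, h1]
    have e1 : d * (u*C*0 + s*S*1) = d*s*S := by ring
    have e2 : d * (-(u*S)*0 + s*C*1) = d*s*C := by ring
    rw [e1, e2]
    have : (d*s*S)^2 + (d*s*C)^2 = (d*s)^2 := by linear_combination (d*s)^2 * hCS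
    rw [this]

lemma MN_eq_one (s u c d C S : ℝ) (hu : u * s = 1) (hd : d * c = 1) (hCS : C^2 + S^2 = 1) :
    (c • !![s*C, -(s*S); u*S, u*C]) * (d • !![u*C, s*S; -(u*S), s*C]) = 1 := by
  ext i j
  fin_cases i <;> fin_cases j <;>
    simp [Matrix.mul_apply, Fin.sum_univ_two, Matrix.one_apply]
  · linear_combination (c*d*s*u)*hCS + c*d*hu + hd
  · ring
  · ring
  · linear_combination (c*d*s*u)*hCS + c*d*hu + hd

lemma NM_eq_one (s u c d C S : ℝ) (hu : u * s = 1) (hd : d * c = 1) (hCS : C^2 + S^2 = 1) :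
    (d • !![u*C, s*S; -(u*S), s*C]) * (c • !![s*C, -(s*S); u*S, u*C]) = 1 := by
  ext i j
  fin_cases i <;> fin_cases j <;>
    simp [Matrix.mul_apply, Fin.sum_univ_two, Matrix.one_apply]
  · linear_combination (c*d*s*u)*hCS + c*d*hu + hd
  · ring
  · ring
  · linear_combination (c*d*s*u)*hCS + c*d*hu + hd

lemma arctan_le_self' {x : ℝ} (hx : 0 ≤ x) : arctan x ≤ x := by
  rcases eq_or_lt_of_le hx with h | h
  · simp [← h]
  · have h1 : 0 < arctan x := by
      rw [← Real.arctan_zero]; exact Real.arctan_strictMono h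
    have := Real.lt_tan h1 (Real.arctan_lt_pi_div_two x)
    rw [Real.tan_arctan] at this
    linarith

lemma arctan_diff_le (a u : ℝ) (ha : 1 ≤ a) (hu : 0 ≤ u) :
    arctan u - arctan (u/a) ≤ (π/2) * Real.log a := by
  have ha0 : (0:ℝ) < a := lt_of_lt_of_le one_pos ha
  have hloga : 0 ≤ Real.log a := Real.log_nonneg ha
  have huarc : 0 ≤ arctan (u/a) := by
    rw [← Real.arctan_zero]
    exact Real.arctan_strictMono.monotone (by positivity)
  rcases le_or_gt 1 (Real.log a) with hl | hl
  · have := Real.arctan_lt_pi_div_two u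
    nlinarith [Real.pi_pos]
  · -- a < e ≤ π
    have haexp : a < Real.exp 1 := by
      calc a = Real.exp (Real.log a) := (Real.exp_log ha0).symm
      _ < Real.exp 1 := Real.exp_lt_exp.2 hl
    have hapi : a ≤ π := by
      have h1 : Real.exp 1 < 2.7182818286 := Real.exp_one_lt_d9
      have h2 : (3.141592 : ℝ) < π := Real.pi_gt_d6
      linarith
    -- identity
    have hid : arctan u - arctan (u/a) = arctan ((u - u/a)/(1 + u*(u/a))) := by
      have hlt : u * (-(u/a)) < 1 := by
        have : 0 ≤ u * (u/a) := by positivity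
        linarith
      have := Real.arctan_add (x := u) (y := -(u/a)) hlt
      rw [Real.arctan_neg] at this
      rw [← sub_eq_add_neg] at this
      rw [this]
      ring_nf
    rw [hid]
    set w := u/a with hwdef
    have hw : w * a = u := div_mul_cancel₀ u (ne_of_gt ha0)
    have hw0 : 0 ≤ w := by positivity
    have huw : w ≤ u := by rw [hwdef]; exact div_le_self hu ha
    have harg : (u - w)/(1 + u*w) ≤ (a-1)/2 := by
      rw [← hw, div_le_div_iff₀ (by nlinarith [sq_nonneg w]) two_pos]
      nlinarith [sq_nonneg (w-1), mul_nonneg (sub_nonneg.2 ha) (sq_nonneg w),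
        mul_nonneg (mul_nonneg (sub_nonneg.2 ha) (sub_nonneg.2 ha)) (sq_nonneg w)]
    have harg0 : 0 ≤ (u - w)/(1 + u*w) := by
      apply div_nonneg (by linarith) (by positivity)
    have hlog : (a-1)/a ≤ Real.log a := by
      have := Real.log_le_sub_one_of_pos (x := a⁻¹) (by positivity)
      rw [Real.log_inv] at this
      have h2 : a⁻¹ = 1/a := (one_div a).symm
      rw [h2] at this
      have h3 : -Real.log a ≤ 1/a - 1 := this
      have h4 : (a-1)/a = 1 - 1/a := by field_simp
      linarith [h4 ▸ le_of_eq h4]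
    calc arctan ((u - w)/(1 + u*w)) ≤ (u - w)/(1 + u*w) := arctan_le_self' harg0
    _ ≤ (a-1)/2 := harg
    _ ≤ (π/2) * Real.log a := by
        have h5 : (a-1)/a ≤ Real.log a := hlog
        have h6 : 0 < a := ha0
        rw [div_le_iff₀ h6] at h5  -- a - 1 ≤ log a * a
        nlinarith [Real.pi_pos, mul_le_mul_of_nonneg_left hapi hloga]

lemma abs_arctan_diff_le (a u : ℝ) (ha : 1 ≤ a) :
    |arctan (u/a) - arctan u| ≤ (π/2) * Real.log a := by
  have ha0 : (0:ℝ) < a := lt_of_lt_of_le one_pos ha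
  rcases le_or_gt 0 u with hu | hu
  · rw [abs_sub_comm, abs_of_nonneg]
    · exact arctan_diff_le a u ha hu
    · have : u/a ≤ u := div_le_self hu ha
      exact sub_nonneg.2 (Real.arctan_strictMono.monotone this)
  · have key : u ≤ u/a := by
      rw [le_div_iff₀ ha0]; nlinarith
    rw [abs_of_nonneg (sub_nonneg.2 (Real.arctan_strictMono.monotone key))]
    calc arctan (u/a) - arctan u = arctan (-u) - arctan ((-u)/a) := by
          rw [neg_div, Real.arctan_neg, Real.arctan_neg]; ring
    _ ≤ (π/2) * Real.log a := arctan_diff_le a (-u) ha (by linarith)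

lemma GT.theta_add_int (g : GT) (t : ℝ) (n : ℤ) : g.θ (t + n) = g.θ t + n := by
  cases n with
  | ofNat m => push_cast; exact g.theta_add_nat t m
  | negSucc m =>
      have h := g.theta_add_nat (t + Int.negSucc m) (m+1)
      push_cast [Int.cast_negSucc] at h ⊢
      have e : t + -((m:ℝ)+1) + ((m:ℝ)+1) = t := by ring
      rw [e] at h
      linarith

lemma theta_bound (a : ℝ) (ha : 1 ≤ a) (g : GT)
    (hgθ : ∀ t ∈ Set.Ioo (-(1 : ℝ)/2) (1/2),
      g.θ t = (1/π) * Real.arctan (Real.tan (π * t) / a)) :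
    ∀ t : ℝ, |g.θ t - t| ≤ (1/2) * Real.log a := by
  have hπ : 0 < π := Real.pi_pos
  have core : ∀ t ∈ Set.Ioo (-(1:ℝ)/2) (1/2), |g.θ t - t| ≤ (1/2) * Real.log a := by
    intro t ht
    rw [hgθ t ht]
    have h1 : -(π/2) < π*t := by nlinarith [ht.1]
    have h2 : π*t < π/2 := by nlinarith [ht.2]
    have e : (1/π) * Real.arctan (Real.tan (π*t)/a) - t
        = (1/π) * (Real.arctan (Real.tan (π*t)/a) - Real.arctan (Real.tan (π*t))) := by
      rw [Real.arctan_tan h1 h2]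
      field_simp
    rw [e, abs_mul, abs_of_nonneg (by positivity : (0:ℝ) ≤ 1/π)]
    have hb := abs_arctan_diff_le a (Real.tan (π*t)) ha
    calc (1/π) * |Real.arctan (Real.tan (π*t)/a) - Real.arctan (Real.tan (π*t))|
        ≤ (1/π) * ((π/2) * Real.log a) := by
          apply mul_le_mul_of_nonneg_left hb (by positivity)
    _ = (1/2) * Real.log a := by field_simp
  have icc : ∀ t ∈ Set.Icc (-(1:ℝ)/2) (1/2), |g.θ t - t| ≤ (1/2) * Real.log a := by
    have hclosed : IsClosed {t : ℝ | |g.θ t - t| ≤ (1/2) * Real.log a} :=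
      isClosed_le (Continuous.abs (g.cont.sub continuous_id)) continuous_const
    have hcl := closure_minimal core hclosed
    rw [closure_Ioo (by norm_num : (-(1:ℝ)/2) ≠ 1/2)] at hcl
    exact hcl
  intro t
  have hr := abs_le.1 (abs_sub_round t)
  have hmem : t - round t ∈ Set.Icc (-(1:ℝ)/2) (1/2) := by
    constructor <;> [linarith [hr.1]; linarith [hr.2]]
  have hbd := icc _ hmem
  have hper := g.theta_add_int (t - round t) (round t)
  have h2 : (t - round t) + (round t : ℝ) = t := by ring
  have e : g.θ t - t = g.θ (t - round t) - (t - round t) := by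
    rw [← h2, hper]; ring
  rw [e]
  exact hbd

end AuxHelpers

/-- Let `a ≥ 1` and let `g ∈ G` have `T_g = diag(√a, 1/√a)` and
`θ_g(t) = (1/π) arctan(tan(πt)/a)` (on a fundamental domain, extended compatibly).
Let `λ ∈ ℂ` act through the subgroup of lifts of conformal maps, `λ = x + iy` corresponding
to `T_λ = e^{−πy} R_{πx}` and `θ_λ(t) = t + x`.  Then `inf_{λ ∈ ℂ} Δ(g·λ) = (1/2) log a`. -/
theorem stmt_9 (a : ℝ) (ha : 1 ≤ a) (g : GT)
    (hgT : g.T = !![Real.sqrt a, 0; 0, (Real.sqrt a)⁻¹])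
    (hgθ : ∀ t ∈ Set.Ioo (-(1 : ℝ)/2) (1/2),
      g.θ t = (1/π) * Real.arctan (Real.tan (π * t) / a))
    (conf : ℂ → GT)
    (hconfT : ∀ l : ℂ, (conf l).T = Real.exp (-π * l.im) •
      !![Real.cos (π * l.re), -Real.sin (π * l.re);
         Real.sin (π * l.re),  Real.cos (π * l.re)])
    (hconfθ : ∀ (l : ℂ) (t : ℝ), (conf l).θ t = t + l.re) :
    IsGLB (Set.range fun l : ℂ => (GT.mul g (conf l)).Δ) ((1/2) * Real.log a) := by
  classical
  have hπ : 0 < π := Real.pi_pos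
  set s := Real.sqrt a with hsdef
  have ha0 : (0:ℝ) < a := lt_of_lt_of_le one_pos ha
  have hs1 : 1 ≤ s := by
    rw [hsdef, ← Real.sqrt_one]; exact Real.sqrt_le_sqrt ha
  have hs0 : (0:ℝ) < s := lt_of_lt_of_le one_pos hs1
  have hu : s⁻¹ * s = 1 := inv_mul_cancel₀ (ne_of_gt hs0)
  have hlog : Real.log s = (1/2) * Real.log a := by
    rw [hsdef, Real.log_sqrt (le_of_lt ha0)]; ring
  -- generic computation of the matrix parts
  have key : ∀ l : ℂ,
      Real.log (opNorm (GT.mul g (conf l)).T) = Real.log (Real.exp (-π * l.im) * s) ∧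
      Real.log (opNorm (GT.mul g (conf l)).T⁻¹) = Real.log ((Real.exp (-π * l.im))⁻¹ * s) := by
    intro l
    set c := Real.exp (-π * l.im) with hcdef
    set C := Real.cos (π * l.re) with hCdef
    set S := Real.sin (π * l.re) with hSdef
    have hc : 0 < c := Real.exp_pos _
    have hd : c⁻¹ * c = 1 := inv_mul_cancel₀ (ne_of_gt hc)
    have hCS : C^2 + S^2 = 1 := by
      rw [hCdef, hSdef]; exact Real.cos_sq_add_sin_sq _
    have hMT : (GT.mul g (conf l)).T = c • !![s*C, -(s*S); s⁻¹*S, s⁻¹*C] := by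
      show g.T * (conf l).T = _
      rw [hgT, hconfT l, Matrix.mul_smul]
      congr 1
      ext i j
      fin_cases i <;> fin_cases j <;>
        simp [Matrix.mul_apply, Fin.sum_univ_two, hCdef, hSdef] <;> ring
    have hMinv : (GT.mul g (conf l)).T⁻¹ = c⁻¹ • !![s⁻¹*C, s*S; -(s⁻¹*S), s*C] := by
      rw [hMT]
      exact Matrix.inv_eq_right_inv (MN_eq_one s s⁻¹ c c⁻¹ C S hu hd hCS)
    constructor
    · rw [hMT, opNorm_M s s⁻¹ c C S hs1 hu hc hCS]
    · rw [hMinv, opNorm_N s s⁻¹ c c⁻¹ C S hs1 hu hc hd hCS]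
  constructor
  · -- lower bound
    rintro x ⟨l, rfl⟩
    obtain ⟨h1, h2⟩ := key l
    set c := Real.exp (-π * l.im) with hcdef
    have hc : 0 < c := Real.exp_pos _
    have hmain : (1/2) * Real.log a ≤
        max (Real.log (opNorm (GT.mul g (conf l)).T))
            (Real.log (opNorm (GT.mul g (conf l)).T⁻¹)) := by
      rw [h1, h2, ← hlog]
      rcases le_total c 1 with h | h
      · have hd1 : 1 ≤ c⁻¹ := (one_le_inv₀ hc).2 h
        have : s ≤ c⁻¹ * s := by nlinarith
        exact le_max_of_le_right (Real.log_le_log hs0 this)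
      · have : s ≤ c * s := by nlinarith
        exact le_max_of_le_left (Real.log_le_log hs0 this)
    calc (1/2) * Real.log a ≤ _ := hmain
    _ ≤ (GT.mul g (conf l)).Δ := le_max_right _ _
  · -- greatest lower bound: value attained at l = 0
    intro b hb
    apply hb
    refine ⟨0, ?_⟩
    obtain ⟨h1, h2⟩ := key 0
    simp only [Complex.zero_im, Complex.zero_re, mul_zero, neg_zero, Real.exp_zero,
      one_mul, inv_one] at h1 h2
    have hsup : (⨆ t : ℝ, |(GT.mul g (conf 0)).θ t - t|) ≤ (1/2) * Real.log a := by
      apply Real.iSup_le _ (by nlinarith [Real.log_nonneg ha])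
      intro t
      show |g.θ ((conf 0).θ t) - t| ≤ _
      rw [hconfθ 0 t]
      simp only [Complex.zero_re, add_zero]
      exact theta_bound a ha g hgθ t
    show max _ (max _ _) = _
    rw [h1, h2, hlog, max_self, max_eq_right hsup]
end

section
/- If A and B are hearts of bounded (non-degenerate) t-structures on a triangulated category C and A ⊆ B as full subcategories, then A = B. -/
open CategoryTheory Triangulated

variable {C : Type*} [Category C] [Preadditive C] [Limits.HasZeroObject C]
  [HasShift C ℤ] [∀ n : ℤ, (shiftFunctor C n).Additive] [Pretriangulated C]

/-- The heart of a t-structure: the objects which are both `≤ 0` and `≥ 0`. -/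
def heartSet (t : TStructure C) : Set C := {X : C | t.le 0 X ∧ t.ge 0 X}

/-- A t-structure is bounded (non-degenerate) if every object is `≤ n` and `≥ m` for some
integers `n, m`, equivalently every object has a finite filtration with factors in shifts of
the heart. -/
def IsBoundedT (t : TStructure C) : Prop := ∀ X : C, ∃ n m : ℤ, t.le n X ∧ t.ge m X

namespace Stmt14Aux

open Limits Pretriangulated

variable (t : TStructure C)

/-- Orthogonality for general degrees. -/
lemma zero_of_LE_GE {X Y : C} (f : X ⟶ Y) (n : ℤ) (hX : t.le n X) (hY : t.ge (n + 1) Y) :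
    f = 0 := by
  have : (shiftFunctor C n).map f = 0 :=
    t.zero' _ (t.le_shift n n 0 (by omega) X hX) (t.ge_shift (n + 1) n 1 (by omega) Y hY)
  apply (shiftFunctor C n).map_injective
  rw [this, Functor.map_zero]

/-- The aisle is the left orthogonal of the coaisle. -/
lemma LE_iff_orthogonal (n : ℤ) (X : C) :
    t.le n X ↔ ∀ (Y : C), t.ge (n + 1) Y → ∀ (f : X ⟶ Y), f = 0 := by
  constructor
  · intro hX Y hY f
    exact zero_of_LE_GE t f n hX hY
  · intro hvan
    obtain ⟨A, B, hA, hB, f, g, h', mem⟩ := t.exists_triangle X n (n + 1) rfl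
    have hg : g = 0 := hvan B hB g
    obtain ⟨p, hp⟩ := Triangle.yoneda_exact₃ _ mem (𝟙 B)
      (by simp only [Triangle.mk_mor₂, hg]; exact zero_comp)
    have hp0 : p = 0 := zero_of_LE_GE t p (n - 1)
      (t.le_shift n 1 (n - 1) (by omega) A hA)
      (t.ge_antitone (by omega : n - 1 + 1 ≤ n + 1) B hB)
    have hBzero : IsZero B := by
      rw [IsZero.iff_id_eq_zero, hp, hp0, comp_zero]; rfl
    have : IsIso f := Triangle.isZero₃_iff_isIso₁ _ mem |>.1 hBzero
    exact (t.le n).prop_of_iso (asIso f) hA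

/-- The coaisle is the right orthogonal of the aisle. -/
lemma GE_iff_orthogonal (n : ℤ) (Y : C) :
    t.ge (n + 1) Y ↔ ∀ (X : C), t.le n X → ∀ (f : X ⟶ Y), f = 0 := by
  constructor
  · intro hY X hX f
    exact zero_of_LE_GE t f n hX hY
  · intro hvan
    obtain ⟨A, B, hA, hB, f, g, h', mem⟩ := t.exists_triangle Y n (n + 1) rfl
    have hf : f = 0 := hvan A hA f
    obtain ⟨q, hq⟩ := Triangle.coyoneda_exact₂ _ (inv_rot_of_distTriang _ mem) (𝟙 A)
      (by simp only [Triangle.invRotate_mor₂, Triangle.mk_mor₁, hf]; exact comp_zero)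
    have hq0 : q = 0 := zero_of_LE_GE t q n hA
      (t.ge_antitone (by omega : n + 1 ≤ n + 2)
        _ (t.ge_shift (n + 1) (-1) (n + 2) (by omega) B hB))
    have hAzero : IsZero A := by
      rw [IsZero.iff_id_eq_zero, hq, hq0, zero_comp]; rfl
    have : IsIso g := Triangle.isZero₁_iff_isIso₂ _ mem |>.1 hAzero
    exact (t.ge (n + 1)).prop_of_iso (asIso g).symm hB

/-- The aisle is closed under extensions. -/
lemma LE_ext (T : Triangle C) (hT : T ∈ distTriang C) (n : ℤ)
    (h₁ : t.le n T.obj₁) (h₃ : t.le n T.obj₃) : t.le n T.obj₂ := by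
  rw [LE_iff_orthogonal]
  intro Y hY f
  obtain ⟨g, rfl⟩ := Triangle.yoneda_exact₂ _ hT f (by
    rw [zero_of_LE_GE t (T.mor₁ ≫ f) n h₁ hY])
  rw [zero_of_LE_GE t g n h₃ hY, comp_zero]

/-- The coaisle is closed under extensions. -/
lemma GE_ext (T : Triangle C) (hT : T ∈ distTriang C) (n : ℤ)
    (h₁ : t.ge n T.obj₁) (h₃ : t.ge n T.obj₃) : t.ge n T.obj₂ := by
  obtain ⟨m, rfl⟩ : ∃ m, n = m + 1 := ⟨n - 1, by omega⟩
  rw [GE_iff_orthogonal]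
  intro X hX f
  obtain ⟨g, rfl⟩ := Triangle.coyoneda_exact₂ _ hT f (by
    rw [zero_of_LE_GE t (f ≫ T.mor₂) m hX h₃])
  rw [zero_of_LE_GE t g m hX h₁, zero_comp]

lemma LE_of_isZero {X : C} (hX : IsZero X) (n : ℤ) : t.le n X := by
  rw [LE_iff_orthogonal]
  intro Y _ f
  exact hX.eq_of_src f 0

lemma GE_of_isZero {X : C} (hX : IsZero X) (n : ℤ) : t.ge n X := by
  obtain ⟨m, rfl⟩ : ∃ m, n = m + 1 := ⟨n - 1, by omega⟩
  rw [GE_iff_orthogonal]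
  intro W _ f
  exact hX.eq_of_tgt f 0

variable {t}

/-- Key induction: on bounded objects, a heart inclusion forces the inclusion of
aisles and coaisles. -/
lemma le_ge_of_subset {t' : TStructure C} (h : heartSet t ⊆ heartSet t') :
    ∀ (k : ℕ) (X : C) (n m : ℤ), n ≤ m + k → t.le n X → t.ge m X →
      t'.le n X ∧ t'.ge m X := by
  intro k
  induction k with
  | zero =>
    intro X n m hk hLE hGE
    rcases lt_trichotomy n m with hlt | rfl | hlt
    · -- X is zero
      have : IsZero X := by
        rw [IsZero.iff_id_eq_zero]
        exact zero_of_LE_GE t (𝟙 X) n hLE (t.ge_antitone (by omega) X hGE)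
      exact ⟨LE_of_isZero t' this n, GE_of_isZero t' this m⟩
    · -- X is in a shift of the heart
      have hheart : X⟦n⟧ ∈ heartSet t :=
        ⟨t.le_shift n n 0 (by omega) X hLE, t.ge_shift n n 0 (by omega) X hGE⟩
      obtain ⟨h1, h2⟩ := h hheart
      constructor
      · rw [← t'.shift_le n 0 n (by omega)]
        exact h1
      · rw [← t'.shift_ge n 0 n (by omega)]
        exact h2
    · omega
  | succ k ih =>
    intro X n m hk hLE hGE
    rcases le_or_gt n m with hle | hlt
    · exact ih X n m (by omega) hLE hGE
    · obtain ⟨A, B, hA, hB, f, g, h', mem⟩ := t.exists_triangle X (n - 1) n (by omega)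
      -- B is in LE n (from the rotated triangle X → B → A⟦1⟧)
      have hBLE : t.le n B := by
        refine LE_ext t _ (rot_of_distTriang _ mem) n hLE ?_
        exact t.le_monotone (by omega : n - 2 ≤ n) _
          (t.le_shift (n - 1) 1 (n - 2) (by omega) A hA)
      -- A is in GE m (from the inverse rotated triangle B⟦-1⟧ → A → X)
      have hAGE : t.ge m A := by
        refine GE_ext t _ (inv_rot_of_distTriang _ mem) m ?_ hGE
        exact t.ge_antitone (by omega : m ≤ n + 1) _
          (t.ge_shift n (-1) (n + 1) (by omega) B hB)
      obtain ⟨hA1, hA2⟩ := ih A (n - 1) m (by omega) hA hAGE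
      obtain ⟨hB1, hB2⟩ := ih B n n (by omega) hBLE hB
      constructor
      · exact LE_ext t' _ mem n (t'.le_monotone (by omega : n - 1 ≤ n) A hA1) hB1
      · exact GE_ext t' _ mem m hA2 (t'.ge_antitone (by omega : m ≤ n) B hB2)

lemma LE_subset {t' : TStructure C} (ht : IsBoundedT t) (h : heartSet t ⊆ heartSet t')
    {X : C} {n : ℤ} (hX : t.le n X) : t'.le n X := by
  obtain ⟨n₀, m, _, hGE⟩ := ht X
  exact (le_ge_of_subset h (n - m).toNat X n m (by omega) hX hGE).1

lemma GE_subset {t' : TStructure C} (ht : IsBoundedT t) (h : heartSet t ⊆ heartSet t')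
    {X : C} {m : ℤ} (hX : t.ge m X) : t'.ge m X := by
  obtain ⟨n, m₀, hLE, _⟩ := ht X
  exact (le_ge_of_subset h (n - m).toNat X n m (by omega) hLE hX).2

end Stmt14Aux

/-- If `A` and `B` are hearts of bounded (non-degenerate) t-structures on a
triangulated category `C` and `A ⊆ B` as full subcategories, then `A = B`: distinct hearts
of bounded t-structures cannot be nested. -/
theorem stmt_14 (t t' : TStructure C) (ht : IsBoundedT t) (ht' : IsBoundedT t')
    (h : heartSet t ⊆ heartSet t') :
    heartSet t = heartSet t' := by
  apply Set.Subset.antisymm h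
  rintro X ⟨hX1, hX2⟩
  constructor
  · -- t.le 0 X
    rw [Stmt14Aux.LE_iff_orthogonal]
    intro Y hY f
    exact Stmt14Aux.zero_of_LE_GE t' f 0 hX1 (Stmt14Aux.GE_subset ht h hY)
  · -- t.ge 0 X
    have : t.ge (-1 + 1) X := by
      rw [Stmt14Aux.GE_iff_orthogonal]
      intro W hW f
      exact Stmt14Aux.zero_of_LE_GE t' f (-1) (Stmt14Aux.LE_subset ht h hW)
        (by simpa using hX2)
    simpa using this
end
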